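/- For every n ≥ 1, the map assigning to each Eulerian cycle σ of the de Bruijn graph H_n the sequence s : ZMod (2^n) → Bool defined by s(i) = (σ^i(0ⁿ))(0), where 0ⁿ denotes the all-false word in (Fin n → Bool), is a bijection from Θ(H_n) onto B₀(n), the set of de Bruijn sequences of order n starting with n zeros. -/

import Mathlib

/-- Source of an edge of the de Bruijn graph `H_n`: the first `n-1` bits of
the word `w` of length `n`. -/
def bSrc (n : ℕ) (w : Fin n → Bool) : Fin (n - 1) → Bool :=
  fun j => w (Fin.castLE (Nat.sub_le n 1) j)

/-- Target of an edge of the de Bruijn graph `H_n`: the last `n-1` bits of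
the word `w` of length `n`. -/
def bTgt (n : ℕ) (w : Fin n → Bool) : Fin (n - 1) → Bool :=
  fun j => w ⟨j.1 + 1, by have := j.isLt; omega⟩

/-- `s : ZMod (2^n) → Bool` is a de Bruijn sequence of order `n`: the window map
sending `i` to the length-`n` word starting at position `i` is injective. -/
def IsDeBruijn (n : ℕ) (s : ZMod (2 ^ n) → Bool) : Prop :=
  Function.Injective (fun i : ZMod (2 ^ n) => fun j : Fin n => s (i + (j : ℕ)))

/-- `s` starts with `n` zeros: `s i = false` for all `0 ≤ i ≤ n - 1`. -/
def StartsWithZeros (n : ℕ) (s : ZMod (2 ^ n) → Bool) : Prop :=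
  ∀ i : ℕ, i < n → s (i : ZMod (2 ^ n)) = false

lemma shift_pow {n : ℕ} {σ : Equiv.Perm (Fin n → Bool)}
    (hσ : ∀ w, bSrc n (σ w) = bTgt n w) :
    ∀ (k : ℕ) (w : Fin n → Bool) (m : ℕ) (h : m + k < n),
      (σ ^ k) w ⟨m, by omega⟩ = w ⟨m + k, h⟩ := by
  intro k
  induction k with
  | zero => intro w m h; simp
  | succ k ih =>
    intro w m h
    have h1 : (σ ^ (k+1)) w = (σ ^ k) (σ w) := by
      rw [pow_succ, Equiv.Perm.mul_apply]
    rw [h1, ih (σ w) m (by omega)]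
    have h2 := congrFun (hσ w) ⟨m + k, by omega⟩
    exact h2

lemma card_words (n : ℕ) : Fintype.card (Fin n → Bool) = 2 ^ n := by
  simp [Fintype.card_fun]

lemma order_eq {n : ℕ} {σ : Equiv.Perm (Fin n → Bool)}
    (h2 : σ.IsCycle) (h3 : σ.support = Finset.univ) : orderOf σ = 2 ^ n := by
  rw [h2.orderOf, h3, Finset.card_univ, card_words]

lemma window_eq {n : ℕ} (hn : 1 ≤ n) {σ : Equiv.Perm (Fin n → Bool)}
    (h1 : ∀ w, bSrc n (σ w) = bTgt n w) (h2 : σ.IsCycle) (h3 : σ.support = Finset.univ)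
    (i : ZMod (2 ^ n)) (j : Fin n) :
    (σ ^ (i + (j : ℕ)).val) (fun _ => false) ⟨0, hn⟩
      = (σ ^ i.val) (fun _ => false) j := by
  haveI : NeZero (2 ^ n) := ⟨by positivity⟩
  have ho := order_eq h2 h3
  have hj : ((j : ℕ) : ZMod (2 ^ n)).val = (j : ℕ) :=
    ZMod.val_cast_of_lt (lt_trans j.isLt (Nat.lt_two_pow_self (n := n)))
  have hpow : σ ^ (i + (j : ℕ)).val = σ ^ ((j : ℕ) + i.val) := by
    rw [pow_eq_pow_iff_modEq, ho, ZMod.val_add, hj, Nat.add_comm (j : ℕ) i.val]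
    exact (Nat.mod_modEq _ _)
  rw [hpow, pow_add, Equiv.Perm.mul_apply]
  have := shift_pow h1 (j : ℕ) ((σ ^ i.val) (fun _ => false)) 0 (by omega)
  rw [this]
  exact congrArg _ (Fin.ext (Nat.zero_add _))

lemma enum_inj {n : ℕ} {σ : Equiv.Perm (Fin n → Bool)}
    (h2 : σ.IsCycle) (h3 : σ.support = Finset.univ) :
    Function.Injective (fun i : ZMod (2 ^ n) =>
      (σ ^ i.val) (fun _ => false : Fin n → Bool)) := by
  haveI : NeZero (2 ^ n) := ⟨by positivity⟩
  have ho := order_eq h2 h3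
  have hmove : σ (fun _ => false) ≠ (fun _ => false) := by
    have : (fun _ => false : Fin n → Bool) ∈ σ.support := by
      rw [h3]; exact Finset.mem_univ _
    exact Equiv.Perm.mem_support.mp this
  have key : ∀ a b : ℕ, b ≤ a → (σ ^ a) (fun _ => false) = (σ ^ b) (fun _ => false) →
      (2 ^ n : ℕ) ∣ a - b := by
    intro a b hba hab
    have : (σ ^ b) ((σ ^ (a - b)) (fun _ => false)) = (σ ^ b) (fun _ => false) := by
      rw [← Equiv.Perm.mul_apply, ← pow_add]
      rwa [Nat.add_sub_cancel' hba]
    have hfix : (σ ^ (a - b)) (fun _ => false : Fin n → Bool) = (fun _ => false) :=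
      (σ ^ b).injective this
    have h1 : σ ^ (a - b) = 1 := (h2.pow_eq_one_iff' hmove).mpr hfix
    rw [← ho]
    exact orderOf_dvd_of_pow_eq_one h1
  intro i i' h
  simp only at h
  apply ZMod.val_injective
  rcases le_total i'.val i.val with hle | hle
  · have hd := key _ _ hle h
    have hi := ZMod.val_lt i
    have h0 := Nat.eq_zero_of_dvd_of_lt hd (by omega)
    omega
  · have hd := key _ _ hle h.symm
    have hi := ZMod.val_lt i'
    have h0 := Nat.eq_zero_of_dvd_of_lt hd (by omega)
    omega

/-- For `n ≥ 1`, sending an Eulerian cycle `σ` of `H_n` to the sequence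
`s i = (σ^i 0ⁿ) 0` is a bijection from `Θ(H_n)` onto `B₀(n)`. -/
theorem euler_deBruijn_graph_bijOn (n : ℕ) (hn : 1 ≤ n) :
    Set.BijOn
      (fun σ : Equiv.Perm (Fin n → Bool) =>
        fun i : ZMod (2 ^ n) => (σ ^ i.val) (fun _ => false) ⟨0, hn⟩)
      {σ | (∀ w, bSrc n (σ w) = bTgt n w) ∧ σ.IsCycle ∧ σ.support = Finset.univ}
      {s | IsDeBruijn n s ∧ StartsWithZeros n s} := by
  haveI : NeZero (2 ^ n) := ⟨by positivity⟩
  haveI : Fact (1 < 2 ^ n) := ⟨by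
    calc 1 < 2 ^ 1 := by norm_num
    _ ≤ 2 ^ n := Nat.pow_le_pow_right (by norm_num) hn⟩
  refine ⟨?_, ?_, ?_⟩
  · -- MapsTo
    rintro σ ⟨h1, h2, h3⟩
    constructor
    · -- IsDeBruijn
      intro i i' h
      apply enum_inj h2 h3
      simp only
      funext j
      have e1 := window_eq hn h1 h2 h3 i j
      have e2 := window_eq hn h1 h2 h3 i' j
      rw [← e1, ← e2]
      exact congrFun h j
    · -- StartsWithZeros
      intro i hi
      have hv : ((i : ℕ) : ZMod (2 ^ n)).val = i :=
        ZMod.val_cast_of_lt (lt_of_lt_of_le hi (le_of_lt (Nat.lt_two_pow_self (n := n))))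
      simp only [hv]
      exact shift_pow h1 i (fun _ => false) 0 (by omega)
  · -- InjOn
    rintro σ ⟨hσ1, hσ2, hσ3⟩ τ ⟨hτ1, hτ2, hτ3⟩ h
    have hoσ := order_eq hσ2 hσ3
    have hoτ := order_eq hτ2 hτ3
    -- enumerations agree
    have henum : ∀ i : ZMod (2 ^ n), (σ ^ i.val) (fun _ => false)
        = (τ ^ i.val) (fun _ => false) := by
      intro i
      funext j
      rw [← window_eq hn hσ1 hσ2 hσ3 i j, ← window_eq hn hτ1 hτ2 hτ3 i j]
      exact congrFun h (i + (j : ℕ))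
    -- enumeration is surjective
    have hsurj : Function.Surjective (fun i : ZMod (2 ^ n) =>
        (σ ^ i.val) (fun _ => false : Fin n → Bool)) := by
      have hbij := (Fintype.bijective_iff_injective_and_card _).mpr
        ⟨enum_inj hσ2 hσ3, by simp [card_words, ZMod.card]⟩
      exact hbij.2
    apply Equiv.ext
    intro w
    obtain ⟨i, rfl⟩ := hsurj w
    show σ ((σ ^ i.val) fun _ => false) = τ ((σ ^ i.val) fun _ => false)
    have hstep : ∀ (ρ : Equiv.Perm (Fin n → Bool)), orderOf ρ = 2 ^ n →
        ρ ((ρ ^ i.val) (fun _ => false)) = (ρ ^ (i + 1).val) (fun _ => false) := by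
      intro ρ hρ
      have : ρ ^ (i + 1).val = ρ ^ (i.val + 1) := by
        rw [pow_eq_pow_iff_modEq, hρ, ZMod.val_add, ZMod.val_one]
        exact Nat.mod_modEq _ _
      rw [this, pow_succ', Equiv.Perm.mul_apply]
    conv_rhs => rw [henum i]
    rw [hstep σ hoσ, hstep τ hoτ]
    exact henum (i + 1)
  · -- SurjOn
    rintro s ⟨hdb, hz⟩
    set W : ZMod (2 ^ n) → (Fin n → Bool) := fun i => fun j : Fin n => s (i + (j : ℕ)) with hW
    have hWinj : Function.Injective W := hdb
    have hbij : Function.Bijective W :=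
      (Fintype.bijective_iff_injective_and_card _).mpr
        ⟨hWinj, by simp [card_words, ZMod.card]⟩
    let e := Equiv.ofBijective W hbij
    have he : ∀ i, e i = W i := fun _ => rfl
    let σ : Equiv.Perm (Fin n → Bool) := (e.symm.trans (Equiv.addRight 1)).trans e
    have key : ∀ i, σ (W i) = W (i + 1) := by
      intro i
      show e ((Equiv.addRight 1) (e.symm (W i))) = W (i + 1)
      rw [← he i, Equiv.symm_apply_apply]
      rfl
    have powkey : ∀ (k : ℕ) (i : ZMod (2 ^ n)), (σ ^ k) (W i) = W (i + k) := by
      intro k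
      induction k with
      | zero => intro i; simp
      | succ k ih =>
        intro i
        rw [pow_succ', Equiv.Perm.mul_apply, ih, key]
        congr 1
        push_cast
        ring
    have hx0 : (fun _ => false : Fin n → Bool) = W 0 := by
      funext j
      rw [hW]
      simp only [zero_add]
      exact (hz (j : ℕ) j.isLt).symm
    refine ⟨σ, ⟨?_, ?_, ?_⟩, ?_⟩
    · -- shift property
      intro w
      obtain ⟨i, rfl⟩ := hbij.2 w
      funext j
      simp only [bSrc, bTgt, key]
      simp only [hW]
      congr 1
      push_cast [Fin.coe_castLE]
      ring
    · -- IsCycle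
      refine ⟨W 0, ?_, ?_⟩
      · rw [key, zero_add]
        intro hcon
        exact one_ne_zero (hWinj hcon)
      · intro y hy
        obtain ⟨i, rfl⟩ := hbij.2 y
        refine ⟨(i.val : ℤ), ?_⟩
        rw [zpow_natCast, powkey]
        congr 1
        simp [ZMod.natCast_val, ZMod.cast_id]
    · -- support
      apply Finset.eq_univ_iff_forall.mpr
      intro y
      rw [Equiv.Perm.mem_support]
      obtain ⟨i, rfl⟩ := hbij.2 y
      rw [key]
      intro hcon
      have heq := hWinj hcon
      have h2 : i + 1 = i + 0 := by rw [add_zero]; exact heq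
      exact one_ne_zero (add_left_cancel h2)
    · -- image equals s
      funext i
      simp only
      rw [hx0, powkey]
      rw [hW]
      simp [ZMod.natCast_val, ZMod.cast_id]
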